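/- Let C ⊆ ℝⁿ be a nonempty closed convex set and f : ℝⁿ × ℝⁿ → ℝ a bifunction with f(x,x) = 0 for all x ∈ C. Assume: f(x,·) is quasiconvex for every x ∈ C; f is jointly upper semicontinuous at every point of C × C; f is pseudomonotone on C and paramonotone on C with respect to S(EP); S(EP) ≠ ∅. Let α_k > 0 with ∑ α_k = +∞ and ∑ α_k² < +∞, and let x^k ∈ C, g^k ∈ ∂*₂ f(x^k, x^k) with ‖g^k‖ = 1 and x^{k+1} = P_C(x^k − α_k·g^k) for all k. If the set {k : x^k ∈ S(EP)} is finite, then there exists x̄ ∈ S(EP) such that x^k → x̄ as k → ∞. -/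

import Mathlib

open scoped InnerProductSpace
open Filter

private lemma proj_sq_le {F : Type*} [NormedAddCommGroup F] [InnerProductSpace ℝ F]
    (u p z : F) (h : ⟪u - p, z - p⟫_ℝ ≤ 0) : ‖p - z‖ ^ 2 ≤ ‖u - z‖ ^ 2 := by
  have hid : u - z = (u - p) + (p - z) := by abel
  rw [hid, norm_add_sq_real]
  have h2 : ⟪u - p, p - z⟫_ℝ = -⟪u - p, z - p⟫_ℝ := by
    rw [← inner_neg_right]; congr 1; abel
  nlinarith [sq_nonneg ‖u - p‖]

private lemma step_sq {F : Type*} [NormedAddCommGroup F] [InnerProductSpace ℝ F]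
    (a gk z : F) (c : ℝ) :
    ‖(a - c • gk) - z‖ ^ 2 = ‖a - z‖ ^ 2 - 2 * c * ⟪gk, a - z⟫_ℝ + c ^ 2 * ‖gk‖ ^ 2 := by
  have hid : (a - c • gk) - z = (a - z) - c • gk := by abel
  rw [hid, norm_sub_sq_real, real_inner_smul_right, norm_smul, real_inner_comm]
  simp [mul_pow]
  ring

set_option maxHeartbeats 1000000 in
theorem converges_to_solution (n : ℕ)
    (C : Set (EuclideanSpace ℝ (Fin n)))
    (hCne : C.Nonempty) (hCcl : IsClosed C) (hCcv : Convex ℝ C)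
    (f : EuclideanSpace ℝ (Fin n) → EuclideanSpace ℝ (Fin n) → ℝ)
    (hdiag : ∀ x ∈ C, f x x = 0)
    (S : Set (EuclideanSpace ℝ (Fin n)))
    (hS : S = {x ∈ C | ∀ y ∈ C, 0 ≤ f x y})
    (hqc : ∀ x ∈ C, ∀ u v : EuclideanSpace ℝ (Fin n), ∀ t ∈ Set.Icc (0 : ℝ) 1,
      f x ((1 - t) • u + t • v) ≤ max (f x u) (f x v))
    (husc : ∀ p ∈ C ×ˢ C,
      UpperSemicontinuousAt (fun q : EuclideanSpace ℝ (Fin n) × EuclideanSpace ℝ (Fin n) =>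
        f q.1 q.2) p)
    (hpseudo : ∀ x ∈ C, ∀ y ∈ C, 0 ≤ f x y → f y x ≤ 0)
    (hpara : ∀ x ∈ S, ∀ y ∈ C, f x y = 0 → f y x = 0 → y ∈ S)
    (hSne : S.Nonempty)
    (α : ℕ → ℝ) (hαpos : ∀ k, 0 < α k)
    (hαdiv : Tendsto (fun N => ∑ k ∈ Finset.range N, α k) atTop atTop)
    (hαsq : Summable fun k => (α k) ^ 2)
    (x g : ℕ → EuclideanSpace ℝ (Fin n))
    (hxC : ∀ k, x k ∈ C)
    (hg : ∀ k, ∀ y : EuclideanSpace ℝ (Fin n), f (x k) y < 0 → ⟪g k, y - x k⟫_ℝ < 0)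
    (hgnorm : ∀ k, ‖g k‖ = 1)
    (hproj : ∀ k, ∀ y ∈ C, ⟪(x k - α k • g k) - x (k + 1), y - x (k + 1)⟫_ℝ ≤ 0)
    (hfin : {k : ℕ | x k ∈ S}.Finite) :
    ∃ xbar ∈ S, Tendsto x atTop (nhds xbar) := by
  classical
  obtain ⟨xs, hxsS⟩ := hSne
  obtain ⟨b, hb⟩ := hfin.bddAbove
  set N : ℕ := b + 1 with hN
  have hNS : ∀ k, N ≤ k → x k ∉ S := by
    intro k hk hmem
    have : k ≤ b := hb hmem
    omega
  have hSmem : ∀ z ∈ S, z ∈ C ∧ ∀ y ∈ C, 0 ≤ f z y := by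
    intro z hz; rw [hS] at hz; exact hz
  have hxsC : xs ∈ C := (hSmem xs hxsS).1
  have key1 : ∀ z ∈ S, ∀ k, N ≤ k → f (x k) z < 0 := by
    intro z hz k hk
    obtain ⟨hzC, hzsol⟩ := hSmem z hz
    have h1 : 0 ≤ f z (x k) := hzsol (x k) (hxC k)
    have h2 : f (x k) z ≤ 0 := hpseudo z hzC (x k) (hxC k) h1
    rcases lt_or_eq_of_le h2 with h | h
    · exact h
    · exfalso
      have h3 : f z (x k) ≤ 0 := hpseudo (x k) (hxC k) z hzC (le_of_eq h.symm)
      have h4 : f z (x k) = 0 := le_antisymm h3 h1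
      exact hNS k hk (hpara z hz (x k) (hxC k) h4 h)
  have key2 : ∀ z ∈ S, ∀ k, N ≤ k → 0 < ⟪g k, x k - z⟫_ℝ := by
    intro z hz k hk
    have h1 : ⟪g k, z - x k⟫_ℝ < 0 := hg k z (key1 z hz k hk)
    have h2 : ⟪g k, x k - z⟫_ℝ = -⟪g k, z - x k⟫_ℝ := by
      rw [← inner_neg_right]; congr 1; abel
    rw [h2]; linarith
  have fejer : ∀ z ∈ C, ∀ k,
      ‖x (k+1) - z‖ ^ 2 ≤ ‖x k - z‖ ^ 2 - 2 * α k * ⟪g k, x k - z⟫_ℝ + α k ^ 2 := by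
    intro z hz k
    have h1 := proj_sq_le (x k - α k • g k) (x (k+1)) z (hproj k z hz)
    have h2 := step_sq (x k) (g k) z (α k)
    rw [hgnorm k] at h2
    rw [h2] at h1
    nlinarith [h1]
  have tele : ∀ z ∈ S, ∀ m, N ≤ m →
      ‖x m - z‖ ^ 2 + ∑ k ∈ Finset.Ico N m, 2 * α k * ⟪g k, x k - z⟫_ℝ
        ≤ ‖x N - z‖ ^ 2 + ∑ k ∈ Finset.Ico N m, α k ^ 2 := by
    intro z hz m hm
    induction m, hm using Nat.le_induction with
    | base => simp
    | succ m hm ih =>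
      have hf := fejer z (hSmem z hz).1 m
      rw [Finset.sum_Ico_succ_top hm, Finset.sum_Ico_succ_top hm]
      linarith
  set T : ℕ → ℝ := fun k => ∑' j, α (j + k) ^ 2 with hT
  have hTsummable : ∀ k, Summable fun j => α (j + k) ^ 2 := fun k =>
    (summable_nat_add_iff k).2 hαsq
  have hTnonneg : ∀ k, 0 ≤ T k := fun k =>
    tsum_nonneg fun j => sq_nonneg _
  have hTrec : ∀ k, T k = α k ^ 2 + T (k + 1) := by
    intro k
    have := (hTsummable k).tsum_eq_zero_add
    simpa [hT, Nat.add_assoc, Nat.add_comm 1 k] using this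
  have hTto : Tendsto T atTop (nhds 0) := by
    simpa [hT] using tendsto_sum_nat_add (fun k => α k ^ 2)
  have hIcoT : ∀ m, ∑ k ∈ Finset.Ico N m, α k ^ 2 ≤ T 0 := by
    intro m
    have : ∑ k ∈ Finset.Ico N m, α k ^ 2 ≤ ∑' k, α k ^ 2 :=
      hαsq.sum_le_tsum _ (fun k _ => sq_nonneg _)
    simpa [hT] using this
  set B : ℝ := ‖x N - xs‖ ^ 2 + T 0 with hB
  have hsum_bdd : ∀ m, N ≤ m →
      ∑ k ∈ Finset.Ico N m, 2 * α k * ⟪g k, x k - xs⟫_ℝ ≤ B := by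
    intro m hm
    have := tele xs hxsS m hm
    have h1 := hIcoT m
    nlinarith [sq_nonneg ‖x m - xs‖]
  have hbdd : ∀ m, N ≤ m → ‖x m - xs‖ ^ 2 ≤ B := by
    intro m hm
    have := tele xs hxsS m hm
    have h1 := hIcoT m
    have h2 : 0 ≤ ∑ k ∈ Finset.Ico N m, 2 * α k * ⟪g k, x k - xs⟫_ℝ :=
      Finset.sum_nonneg fun k hk => by
        have hk' : N ≤ k := (Finset.mem_Ico.1 hk).1
        have hβ := key2 xs hxsS k hk'
        have hα := (hαpos k).le
        positivity
    linarith
  -- frequently small inner products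
  have hfreq : ∀ m : ℕ, ∃ᶠ k in atTop, N ≤ k ∧ ⟪g k, x k - xs⟫_ℝ < 1 / (m + 1) := by
    intro m
    by_contra hcon
    rw [Filter.not_frequently, Filter.eventually_atTop] at hcon
    obtain ⟨M, hM⟩ := hcon
    set M' : ℕ := max M N with hM'
    have hβ : ∀ k, M' ≤ k → 1 / (m + 1 : ℝ) ≤ ⟪g k, x k - xs⟫_ℝ := by
      intro k hk
      have h1 := hM k (le_trans (le_max_left _ _) hk)
      have h2 : N ≤ k := le_trans (le_max_right _ _) hk
      push_neg at h1
      exact h1 h2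
    set ε : ℝ := 1 / (m + 1 : ℝ) with hε
    have hεpos : 0 < ε := by positivity
    obtain ⟨m₁, hm₁, hm₁ge⟩ := ((Filter.tendsto_atTop.1 hαdiv
      (B / (2 * ε) + ∑ k ∈ Finset.range M', α k + 1)).and
      (eventually_ge_atTop M')).exists
    have hNm₁ : N ≤ m₁ := le_trans (le_max_right _ _) hm₁ge
    have hIco : ∑ k ∈ Finset.Ico M' m₁, α k
        = ∑ k ∈ Finset.range m₁, α k - ∑ k ∈ Finset.range M', α k :=
      Finset.sum_Ico_eq_sub _ hm₁ge
    have hlow : 2 * ε * ∑ k ∈ Finset.Ico M' m₁, α k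
        ≤ ∑ k ∈ Finset.Ico M' m₁, 2 * α k * ⟪g k, x k - xs⟫_ℝ := by
      rw [Finset.mul_sum]
      apply Finset.sum_le_sum
      intro k hk
      have hk' : M' ≤ k := (Finset.mem_Ico.1 hk).1
      have h1 := hβ k hk'
      have h2 := (hαpos k).le
      nlinarith
    have hsplit : ∑ k ∈ Finset.Ico N M', 2 * α k * ⟪g k, x k - xs⟫_ℝ
        + ∑ k ∈ Finset.Ico M' m₁, 2 * α k * ⟪g k, x k - xs⟫_ℝ
        = ∑ k ∈ Finset.Ico N m₁, 2 * α k * ⟪g k, x k - xs⟫_ℝ :=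
      Finset.sum_Ico_consecutive _ (le_max_right _ _) hm₁ge
    have hpos1 : 0 ≤ ∑ k ∈ Finset.Ico N M', 2 * α k * ⟪g k, x k - xs⟫_ℝ :=
      Finset.sum_nonneg fun k hk => by
        have hk' : N ≤ k := (Finset.mem_Ico.1 hk).1
        have hβ2 := key2 xs hxsS k hk'
        have hα := (hαpos k).le
        positivity
    have hub := hsum_bdd m₁ hNm₁
    rw [← hsplit] at hub
    have : 2 * ε * ∑ k ∈ Finset.Ico M' m₁, α k ≤ B := by linarith
    rw [hIco] at this
    have hmul := mul_le_mul_of_nonneg_left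
      (by linarith : B / (2 * ε) + 1 ≤ ∑ k ∈ Finset.range m₁, α k - ∑ k ∈ Finset.range M', α k)
      (by positivity : (0:ℝ) ≤ 2 * ε)
    have hfld : 2 * ε * (B / (2 * ε) + 1) = B + 2 * ε := by
      field_simp
    rw [hfld] at hmul
    linarith
  obtain ⟨φ, hφmono, hφP⟩ := Filter.extraction_forall_of_frequently hfreq
  have hBnn : 0 ≤ B := le_trans (sq_nonneg _) (hbdd N le_rfl)
  have hball : ∀ m, x (φ m) ∈ Metric.closedBall xs (Real.sqrt B) := by
    intro m
    have h1 := hbdd (φ m) (hφP m).1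
    rw [Metric.mem_closedBall, dist_eq_norm]
    exact (Real.le_sqrt (norm_nonneg _) hBnn).2 h1
  obtain ⟨xhat, _, ψ, hψmono, htend⟩ :=
    (isCompact_closedBall xs (Real.sqrt B)).tendsto_subseq hball
  set χ : ℕ → ℕ := φ ∘ ψ with hχ
  have hχmono : StrictMono χ := hφmono.comp hψmono
  have hχN : ∀ m, N ≤ χ m := fun m => (hφP (ψ m)).1
  have htend' : Tendsto (fun m => x (χ m)) atTop (nhds xhat) := htend
  have hβχ : ∀ m : ℕ, ⟪g (χ m), x (χ m) - xs⟫_ℝ < 1 / (m + 1) := by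
    intro m
    refine lt_of_lt_of_le (hφP (ψ m)).2 ?_
    apply one_div_le_one_div_of_le (by positivity)
    have h := hψmono.le_apply (x := m)
    have : (m : ℝ) ≤ (ψ m : ℝ) := by exact_mod_cast h
    linarith
  have hxhatC : xhat ∈ C :=
    hCcl.mem_of_tendsto htend' (Filter.Eventually.of_forall fun m => hxC _)
  have hfkey : 0 ≤ f xhat xs := by
    by_contra hneg
    push_neg at hneg
    have husc' := husc (xhat, xs) ⟨hxhatC, hxsC⟩ (f xhat xs / 2) (by linarith)
    rw [Metric.eventually_nhds_iff] at husc'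
    obtain ⟨δ, hδpos, hδ⟩ := husc'
    have hev1 : ∀ᶠ m in atTop, dist (x (χ m)) xhat < δ :=
      (Metric.tendsto_nhds.1 htend') δ hδpos
    have hev2 : ∀ᶠ m : ℕ in atTop, 1 / (m + 1 : ℝ) < δ / 2 :=
      tendsto_one_div_add_atTop_nhds_zero_nat.eventually_lt_const (by linarith)
    obtain ⟨m, hm1, hm2⟩ := (hev1.and hev2).exists
    set v : EuclideanSpace ℝ (Fin n) := xs + (δ / 2) • g (χ m) with hv
    have hdv : dist v xs = δ / 2 := by
      rw [dist_eq_norm]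
      have : v - xs = (δ / 2) • g (χ m) := by rw [hv]; abel
      rw [this, norm_smul, hgnorm, mul_one, Real.norm_eq_abs,
        abs_of_pos (by linarith : (0:ℝ) < δ / 2)]
    have hdpair : dist ((x (χ m), v) : EuclideanSpace ℝ (Fin n) × EuclideanSpace ℝ (Fin n))
        (xhat, xs) < δ := by
      rw [Prod.dist_eq]
      exact sup_lt_iff.2 ⟨hm1, by rw [hdv]; linarith⟩
    have hfv : f (x (χ m)) v < f xhat xs / 2 := hδ hdpair
    have hfv0 : f (x (χ m)) v < 0 := by linarith
    have hginner := hg (χ m) v hfv0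
    have hexp : v - x (χ m) = (xs - x (χ m)) + (δ / 2) • g (χ m) := by
      rw [hv]; abel
    rw [hexp, inner_add_right, real_inner_smul_right, real_inner_self_eq_norm_sq,
      hgnorm] at hginner
    have h1 : ⟪g (χ m), xs - x (χ m)⟫_ℝ = -⟪g (χ m), x (χ m) - xs⟫_ℝ := by
      rw [← inner_neg_right]; congr 1; abel
    rw [h1] at hginner
    have h2 := hβχ m
    rw [one_pow, mul_one] at hginner
    linarith
  -- xhat is a solution
  have h1 : 0 ≤ f xs xhat := (hSmem xs hxsS).2 xhat hxhatC
  have h2 : f xs xhat ≤ 0 := hpseudo xhat hxhatC xs hxsC hfkey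
  have h3 : f xs xhat = 0 := le_antisymm h2 h1
  have h4 : f xhat xs ≤ 0 := hpseudo xs hxsC xhat hxhatC h1
  have h5 : f xhat xs = 0 := le_antisymm h4 hfkey
  have hxhatS : xhat ∈ S := hpara xs hxsS xhat hxhatC h3 h5
  -- convergence of the whole sequence to xhat
  set e : ℕ → ℝ := fun k => ‖x k - xhat‖ ^ 2 + T k with he
  have hmono : ∀ k, N ≤ k → e (k+1) ≤ e k := by
    intro k hk
    have hf := fejer xhat hxhatC k
    have hβ := key2 xhat hxhatS k hk
    have hα := (hαpos k).le
    have hrec := hTrec k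
    have hpos : 0 ≤ 2 * α k * ⟪g k, x k - xhat⟫_ℝ := by positivity
    simp only [he]
    linarith
  have hchain : ∀ k m, N ≤ k → k ≤ m → e m ≤ e k := by
    intro k m hk hkm
    induction m, hkm using Nat.le_induction with
    | base => exact le_rfl
    | succ m hm ih => exact le_trans (hmono m (le_trans hk hm)) ih
  have heχ : Tendsto (fun m => e (χ m)) atTop (nhds 0) := by
    have h1 : Tendsto (fun m => ‖x (χ m) - xhat‖ ^ 2) atTop (nhds 0) := by
      have h := tendsto_iff_norm_sub_tendsto_zero.1 htend'
      simpa using h.pow 2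
    have h2 : Tendsto (fun m => T (χ m)) atTop (nhds 0) :=
      hTto.comp hχmono.tendsto_atTop
    simpa using h1.add h2
  have heto : Tendsto e atTop (nhds 0) := by
    rw [tendsto_order]
    constructor
    · intro c hc
      filter_upwards with k
      have : 0 ≤ e k := add_nonneg (sq_nonneg _) (hTnonneg k)
      linarith
    · intro c hc
      obtain ⟨m, hm⟩ := (heχ.eventually_lt_const hc).exists
      rw [eventually_atTop]
      exact ⟨χ m, fun k hk => lt_of_le_of_lt (hchain (χ m) k (hχN m) hk) hm⟩
  have hnormsq : Tendsto (fun k => ‖x k - xhat‖ ^ 2) atTop (nhds 0) :=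
    squeeze_zero (fun k => sq_nonneg _)
      (fun k => le_add_of_nonneg_right (hTnonneg k)) heto
  have hnorm : Tendsto (fun k => ‖x k - xhat‖) atTop (nhds 0) := by
    have h := hnormsq.sqrt
    simpa [Real.sqrt_sq (norm_nonneg _)] using h
  exact ⟨xhat, hxhatS, tendsto_iff_norm_sub_tendsto_zero.2 hnorm⟩
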